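/- For every prime p and positive integers k₁,...,k_r with (k₁,...,k_r) ≠ (1,...,1), for all sufficiently large p the non-star cyclic sum formula for finite multiple harmonic sums holds: ∑_{l=1}^{r} ∑_{m=1}^{k_l−1} H_p(m, k_{l+1},...,k_r, k₁,...,k_{l−1}, k_l−m+1) ≡ ∑_{l=1}^{r} ( H_p(k_{l+1},...,k_r,k₁,...,k_{l−1},k_l+1) + H_p(k_{l+1}+1,k_{l+2},...,k_r,k₁,...,k_l) + H_p(1,k_{l+1},...,k_r,k₁,...,k_l) ) (mod p). -/

import Mathlib

/-- Multiple harmonic sum with strict inequalities, with lower bound `a`: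
`MHS p (k₁ :: … :: k_r) a = ∑_{a < n₁ < … < n_r < p} ∏ nᵢ^{-kᵢ}` in `ZMod p`. -/
def MHS (p : ℕ) : List ℕ → ℕ → ZMod p
  | [], _ => 1
  | k :: ks, a => ∑ n ∈ Finset.Ioo a p, ((n : ZMod p))⁻¹ ^ k * MHS p ks n

/-- `Hp p [k₁,…,k_r] = ∑_{0 < n₁ < … < n_r < p} ∏ nᵢ^{-kᵢ}` in `ZMod p`. -/
def Hp (p : ℕ) (ks : List ℕ) : ZMod p := MHS p ks 0

open Finset

/-- Nested chain sum with innermost weight `g` applied to the last variable. -/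
def F (p : ℕ) (g : ℕ → ZMod p) : List ℕ → ℕ → ZMod p
  | [], a => g a
  | k :: ks, a => ∑ n ∈ Finset.Ioo a p, ((n : ZMod p))⁻¹ ^ k * F p g ks n

lemma MHS_eq_F (p : ℕ) (ks : List ℕ) (a : ℕ) : MHS p ks a = F p (fun _ => 1) ks a := by
  induction ks generalizing a with
  | nil => rfl
  | cons k t ih => simp only [MHS, F, ih]

lemma F_congr {p : ℕ} {g₁ g₂ : ℕ → ZMod p} (t : List ℕ) {a : ℕ} (ha : a < p)
    (h : ∀ n, a ≤ n → n < p → g₁ n = g₂ n) : F p g₁ t a = F p g₂ t a := by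
  induction t generalizing a with
  | nil => exact h a le_rfl ha
  | cons k t ih =>
    simp only [F]
    refine Finset.sum_congr rfl fun n hn => ?_
    rw [Finset.mem_Ioo] at hn
    rw [ih hn.2 fun m hm hm' => h m (le_of_lt (lt_of_lt_of_le hn.1 hm)) hm']

lemma F_add {p : ℕ} (g₁ g₂ : ℕ → ZMod p) (t : List ℕ) (a : ℕ) :
    F p (fun v => g₁ v + g₂ v) t a = F p g₁ t a + F p g₂ t a := by
  induction t generalizing a with
  | nil => rfl
  | cons k t ih => simp only [F, ih, mul_add, Finset.sum_add_distrib]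

lemma F_const_mul {p : ℕ} (x : ZMod p) (g : ℕ → ZMod p) (t : List ℕ) (a : ℕ) :
    F p (fun v => x * g v) t a = x * F p g t a := by
  induction t generalizing a with
  | nil => rfl
  | cons k t ih =>
    simp only [F, ih, Finset.mul_sum]
    exact Finset.sum_congr rfl fun n _ => by ring

lemma F_sum {p : ℕ} {ι : Type*} (s : Finset ι) (g : ι → ℕ → ZMod p) (t : List ℕ) (a : ℕ) :
    F p (fun v => ∑ i ∈ s, g i v) t a = ∑ i ∈ s, F p (g i) t a := by
  induction t generalizing a with
  | nil => rfl
  | cons k t ih =>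
    simp only [F, ih, Finset.mul_sum]
    exact Finset.sum_comm

lemma F_append {p : ℕ} (g : ℕ → ZMod p) (t₁ t₂ : List ℕ) (a : ℕ) :
    F p g (t₁ ++ t₂) a = F p (fun v => F p g t₂ v) t₁ a := by
  induction t₁ generalizing a with
  | nil => rfl
  | cons k t ih => simp only [List.cons_append, F]; exact Finset.sum_congr rfl fun n _ => by rw [ih]


def J (p a b : ℕ) : ZMod p := ∑ c ∈ Finset.Ioo a b, ((c : ZMod p))⁻¹

lemma Jrefl (p : ℕ) (hp : p.Prime) (m : ℕ) (hm : m ≤ p) : J p 0 (p - m) = - J p m p := by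
  haveI : Fact p.Prime := ⟨hp⟩
  rw [J, J, ← Finset.sum_neg_distrib]
  refine Finset.sum_nbij' (fun c => p - c) (fun c => p - c) ?_ ?_ ?_ ?_ ?_ <;>
    intro c hc <;> simp only [mem_Ioo] at hc ⊢
  · omega
  · omega
  · omega
  · omega
  · have hcp : c ≤ p := by omega
    have : ((p - c : ℕ) : ZMod p) = -(c : ZMod p) := by
      push_cast [Nat.cast_sub hcp, ZMod.natCast_self]; ring
    rw [this, inv_neg, neg_neg]

lemma Jfull (p : ℕ) (hp : p.Prime) (hp2 : 2 < p) : J p 0 p = 0 := by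
  haveI : Fact p.Prime := ⟨hp⟩
  have h := Jrefl p hp 0 (Nat.zero_le p)
  rw [Nat.sub_zero] at h
  have h2 : (2 : ZMod p) ≠ 0 := by
    have : ((2 : ℕ) : ZMod p) ≠ 0 := by
      rw [Ne, ZMod.natCast_eq_zero_iff]
      exact fun hd => absurd (Nat.le_of_dvd (by norm_num) hd) (not_le.mpr hp2)
    simpa using this
  have h3 : 2 * J p 0 p = 0 := by linear_combination h
  rcases mul_eq_zero.mp h3 with h' | h'
  · exact absurd h' h2
  · exact h'

lemma Jsplit (p : ℕ) {a b c : ℕ} (hab : a < b) (hbc : b < c) :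
    J p a c = J p a b + ((b : ZMod p))⁻¹ + J p b c := by
  have hset : Finset.Ioo a c = Finset.Ioo a b ∪ insert b (Finset.Ioo b c) := by
    ext x; simp only [mem_Ioo, mem_union, mem_insert]; omega
  have hdisj : Disjoint (Finset.Ioo a b) (insert b (Finset.Ioo b c)) := by
    rw [Finset.disjoint_left]
    intro x hx hx'
    simp only [mem_Ioo] at hx
    simp only [mem_insert, mem_Ioo] at hx'
    omega
  rw [J, J, J, hset, Finset.sum_union hdisj, Finset.sum_insert (by simp), add_assoc]

lemma cast_ne_zero' {p n : ℕ} (hp : p.Prime) (h0 : 0 < n) (h1 : n < p) : (n : ZMod p) ≠ 0 := by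
  haveI : Fact p.Prime := ⟨hp⟩
  rw [Ne, ZMod.natCast_eq_zero_iff]
  exact fun hd => absurd (Nat.le_of_dvd h0 hd) (not_le.mpr h1)

lemma pf_pointwise (p : ℕ) (hp : p.Prime) {c u : ℕ} (hc : 0 < c) (hcu : c < u) (hu : u < p) (k : ℕ) :
    ((c : ZMod p))⁻¹ ^ k * ((u - c : ℕ) : ZMod p)⁻¹
      = (∑ j ∈ Finset.range k, ((u : ZMod p))⁻¹ ^ (j+1) * ((c : ZMod p))⁻¹ ^ (k - j))
        + ((u : ZMod p))⁻¹ ^ k * ((u - c : ℕ) : ZMod p)⁻¹ := by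
  haveI : Fact p.Prime := ⟨hp⟩
  have hcz : (c : ZMod p) ≠ 0 := cast_ne_zero' hp hc (hcu.trans hu)
  have huz : (u : ZMod p) ≠ 0 := cast_ne_zero' hp (hc.trans hcu) hu
  have hXz : ((u - c : ℕ) : ZMod p) ≠ 0 := cast_ne_zero' hp (by omega) (by omega)
  have hX : ((u - c : ℕ) : ZMod p) = (u : ZMod p) - (c : ZMod p) := by
    push_cast [Nat.cast_sub (le_of_lt hcu)]; ring
  induction k with
  | zero => simp
  | succ k ih =>
    have key : (c : ZMod p)⁻¹ * ((u - c : ℕ) : ZMod p)⁻¹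
        = (u : ZMod p)⁻¹ * (c : ZMod p)⁻¹ + (u : ZMod p)⁻¹ * ((u - c : ℕ) : ZMod p)⁻¹ := by
      rw [hX] at hXz ⊢
      field_simp
      ring
    rw [Finset.sum_range_succ']
    have hterm : ∀ j, ((u : ZMod p))⁻¹ ^ (j+1+1) * ((c : ZMod p))⁻¹ ^ (k+1-(j+1))
        = (u : ZMod p)⁻¹ * (((u : ZMod p))⁻¹ ^ (j+1) * ((c : ZMod p))⁻¹ ^ (k-j)) := by
      intro j
      rw [Nat.succ_sub_succ]
      ring
    calc (c : ZMod p)⁻¹ ^ (k+1) * ((u - c : ℕ) : ZMod p)⁻¹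
        = (c : ZMod p)⁻¹ ^ k * ((c : ZMod p)⁻¹ * ((u - c : ℕ) : ZMod p)⁻¹) := by ring
      _ = (c : ZMod p)⁻¹ ^ k * ((u : ZMod p)⁻¹ * (c : ZMod p)⁻¹ + (u : ZMod p)⁻¹ * ((u - c : ℕ) : ZMod p)⁻¹) := by rw [key]
      _ = (u : ZMod p)⁻¹ * ((c : ZMod p)⁻¹ ^ (k+1)) + (u : ZMod p)⁻¹ * ((c : ZMod p)⁻¹ ^ k * ((u - c : ℕ) : ZMod p)⁻¹) := by ring
      _ = (u : ZMod p)⁻¹ * ((c : ZMod p)⁻¹ ^ (k+1)) + (u : ZMod p)⁻¹ * ((∑ j ∈ Finset.range k, ((u : ZMod p))⁻¹ ^ (j+1) * ((c : ZMod p))⁻¹ ^ (k - j)) + ((u : ZMod p))⁻¹ ^ k * ((u - c : ℕ) : ZMod p)⁻¹) := by rw [ih]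
      _ = _ := by
          rw [mul_add, Finset.mul_sum]
          simp only [hterm, Nat.sub_zero, pow_one]
          ring

lemma psi_eq (p : ℕ) {v u : ℕ} (hv : 0 < v) (hvu : v ≤ u) :
    ∑ n ∈ Finset.Ioo 0 v, ((u - n : ℕ) : ZMod p)⁻¹ = J p (u - v) u := by
  rw [J]
  refine Finset.sum_nbij' (fun n => u - n) (fun c => u - c) ?_ ?_ ?_ ?_ ?_ <;>
    intro x hx <;> simp only [mem_Ioo] at hx ⊢
  · omega
  · omega
  · omega
  · omega

lemma chi_eq (p : ℕ) {v u : ℕ} (hv : 0 < v) (hvu : v ≤ u) (hu : u < p) :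
    ∑ w ∈ Finset.Ioo u p, ((w - v : ℕ) : ZMod p)⁻¹ = J p (u - v) (p - v) := by
  rw [J]
  refine Finset.sum_nbij' (fun w => w - v) (fun c => c + v) ?_ ?_ ?_ ?_ ?_ <;>
    intro x hx <;> simp only [mem_Ioo] at hx ⊢
  · omega
  · omega
  · omega
  · omega

lemma star_id (p : ℕ) (hp : p.Prime) (hp2 : 2 < p) {v u : ℕ} (hv : 0 < v) (hvu : v ≤ u) (hu : u < p) :
    J p (u - v) u = J p (u - v) (p - v) - J p 0 v - ((v : ZMod p))⁻¹ - J p u p - ((u : ZMod p))⁻¹ := by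
  have hvp : v < p := lt_of_le_of_lt hvu hu
  have hu0 : 0 < u := lt_of_lt_of_le hv hvu
  have h1 : J p 0 v + (v : ZMod p)⁻¹ + J p v p = 0 := by
    rw [← Jsplit p hv hvp, Jfull p hp hp2]
  have h2 : J p 0 u + (u : ZMod p)⁻¹ + J p u p = 0 := by
    rw [← Jsplit p hu0 hu, Jfull p hp hp2]
  have h3 : J p 0 (p - v) = - J p v p := Jrefl p hp v (le_of_lt hvp)
  have h4 : J p (u - v) (p - v) - J p (u - v) u = J p 0 (p - v) - J p 0 u := by
    rcases Nat.eq_zero_or_pos (u - v) with h | h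
    · rw [h]
    · rw [Jsplit p h (show u - v < p - v by omega), Jsplit p h (show u - v < u by omega)]
      ring
  linear_combination h1 + h2 - h3 - h4

lemma swapcu (p : ℕ) (f : ℕ → ℕ → ZMod p) :
    ∑ c ∈ Finset.Ioo 0 p, ∑ u ∈ Finset.Ioo c p, f c u
      = ∑ u ∈ Finset.Ioo 0 p, ∑ c ∈ Finset.Ioo 0 u, f c u := by
  have h1 : ∀ c ∈ Finset.Ioo 0 p, ∑ u ∈ Finset.Ioo c p, f c u
      = ∑ u ∈ Finset.Ioo 0 p, if c < u then f c u else 0 := by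
    intro c hc
    rw [mem_Ioo] at hc
    rw [← Finset.sum_filter]
    congr 1
    ext x
    simp only [mem_Ioo, mem_filter]
    omega
  have h2 : ∀ u ∈ Finset.Ioo 0 p, ∑ c ∈ Finset.Ioo 0 u, f c u
      = ∑ c ∈ Finset.Ioo 0 p, if c < u then f c u else 0 := by
    intro u hu
    rw [mem_Ioo] at hu
    rw [← Finset.sum_filter]
    congr 1
    ext x
    simp only [mem_Ioo, mem_filter]
    omega
  rw [Finset.sum_congr rfl h1, Finset.sum_congr rfl h2, Finset.sum_comm]

lemma F_sub {p : ℕ} (g₁ g₂ : ℕ → ZMod p) (t : List ℕ) (a : ℕ) :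
    F p (fun v => g₁ v - g₂ v) t a = F p g₁ t a - F p g₂ t a := by
  induction t generalizing a with
  | nil => rfl
  | cons k t ih => simp only [F, ih, mul_sub, Finset.sum_sub_distrib]

lemma MHS_append (p : ℕ) (s : List ℕ) (k a : ℕ) :
    MHS p (s ++ [k]) a = F p (fun v => ∑ u ∈ Finset.Ioo v p, ((u : ZMod p))⁻¹ ^ k) s a := by
  rw [MHS_eq_F, F_append]
  simp only [F, mul_one]

def Tt (p k : ℕ) (t : List ℕ) : ZMod p :=
  ∑ c ∈ Finset.Ioo 0 p, ((c : ZMod p))⁻¹ ^ k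
    * F p (fun v => ∑ u ∈ Finset.Ioo v p, ((u - c : ℕ) : ZMod p)⁻¹) t c

def Tt' (p k : ℕ) (t : List ℕ) : ZMod p :=
  ∑ c ∈ Finset.Ioo 0 p,
    F p (fun v => ∑ u ∈ Finset.Ioo v p, ((u : ZMod p))⁻¹ ^ k * ((u - c : ℕ) : ZMod p)⁻¹) t c

lemma pf_main (p : ℕ) (hp : p.Prime) (k : ℕ) (t : List ℕ) :
    Tt p k t = (∑ j ∈ Finset.range k, Hp p ((k - j) :: (t ++ [j+1]))) + Tt' p k t := by
  rw [Tt, Tt']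
  have hmain : ∀ c ∈ Finset.Ioo 0 p,
      ((c : ZMod p))⁻¹ ^ k * F p (fun v => ∑ u ∈ Finset.Ioo v p, ((u - c : ℕ) : ZMod p)⁻¹) t c
        = (∑ j ∈ Finset.range k, ((c : ZMod p))⁻¹ ^ (k - j) * MHS p (t ++ [j+1]) c)
          + F p (fun v => ∑ u ∈ Finset.Ioo v p, ((u : ZMod p))⁻¹ ^ k * ((u - c : ℕ) : ZMod p)⁻¹) t c := by
    intro c hc
    rw [Finset.mem_Ioo] at hc
    rw [← F_const_mul]
    have step : F p (fun v => (c : ZMod p)⁻¹ ^ k * ∑ u ∈ Finset.Ioo v p, ((u - c : ℕ) : ZMod p)⁻¹) t c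
        = F p (fun v => (∑ j ∈ Finset.range k,
              (c : ZMod p)⁻¹ ^ (k - j) * (∑ u ∈ Finset.Ioo v p, ((u : ZMod p))⁻¹ ^ (j+1)))
            + ∑ u ∈ Finset.Ioo v p, ((u : ZMod p))⁻¹ ^ k * ((u - c : ℕ) : ZMod p)⁻¹) t c := by
      refine F_congr t hc.2 ?_
      intro v hcv hvp
      rw [Finset.mul_sum]
      have hptw : ∀ u ∈ Finset.Ioo v p, (c : ZMod p)⁻¹ ^ k * ((u - c : ℕ) : ZMod p)⁻¹
          = (∑ j ∈ Finset.range k, ((u : ZMod p))⁻¹ ^ (j+1) * ((c : ZMod p))⁻¹ ^ (k - j))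
            + ((u : ZMod p))⁻¹ ^ k * ((u - c : ℕ) : ZMod p)⁻¹ := by
        intro u hu
        rw [Finset.mem_Ioo] at hu
        exact pf_pointwise p hp hc.1 (lt_of_le_of_lt hcv hu.1) hu.2 k
      rw [Finset.sum_congr rfl hptw, Finset.sum_add_distrib]
      congr 1
      rw [Finset.sum_comm]
      refine Finset.sum_congr rfl fun j _ => ?_
      rw [Finset.mul_sum]
      exact Finset.sum_congr rfl fun u _ => by ring
    rw [step, F_add, F_sum]
    congr 1
    refine Finset.sum_congr rfl fun j _ => ?_
    rw [F_const_mul, MHS_append]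
  rw [Finset.sum_congr rfl hmain, Finset.sum_add_distrib]
  congr 1
  rw [Finset.sum_comm]
  refine Finset.sum_congr rfl fun j _ => ?_
  simp only [Hp, MHS]

lemma sh_nil (p : ℕ) (hp : p.Prime) (hp2 : 2 < p) (k : ℕ) :
    Tt' p k [] = Tt p k [] - Hp p [1, k] - Hp p [k+1] - Hp p [k, 1] - Hp p [k+1] := by
  have e1 : Tt' p k [] = ∑ u ∈ Finset.Ioo 0 p, ((u : ZMod p))⁻¹ ^ k * J p 0 u := by
    rw [Tt']
    simp only [F]
    rw [swapcu p (fun c u => ((u : ZMod p))⁻¹ ^ k * ((u - c : ℕ) : ZMod p)⁻¹)]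
    refine Finset.sum_congr rfl fun u hu => ?_
    rw [Finset.mem_Ioo] at hu
    rw [← Finset.mul_sum, psi_eq p hu.1 le_rfl, Nat.sub_self]
  have e2 : Tt p k [] = ∑ u ∈ Finset.Ioo 0 p, ((u : ZMod p))⁻¹ ^ k * J p 0 (p - u) := by
    rw [Tt]
    simp only [F]
    refine Finset.sum_congr rfl fun u hu => ?_
    rw [Finset.mem_Ioo] at hu
    rw [chi_eq p hu.1 le_rfl hu.2, Nat.sub_self]
  have e3 : Hp p [1, k] = ∑ u ∈ Finset.Ioo 0 p, ((u : ZMod p))⁻¹ ^ k * J p 0 u := by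
    simp only [Hp, MHS, pow_one, mul_one]
    rw [Finset.sum_congr rfl fun n (_ : n ∈ Finset.Ioo 0 p) =>
      Finset.mul_sum (Finset.Ioo n p) (fun u => ((u : ZMod p))⁻¹ ^ k) ((n : ZMod p))⁻¹]
    rw [swapcu p (fun n u => ((n : ZMod p))⁻¹ * ((u : ZMod p))⁻¹ ^ k)]
    refine Finset.sum_congr rfl fun u _ => ?_
    rw [J, Finset.mul_sum]
    exact Finset.sum_congr rfl fun n _ => mul_comm _ _
  have e4 : Hp p [k, 1] = ∑ u ∈ Finset.Ioo 0 p, ((u : ZMod p))⁻¹ ^ k * J p u p := by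
    simp only [Hp, MHS, pow_one, mul_one, J]
  have e5 : Hp p [k+1] = ∑ u ∈ Finset.Ioo 0 p, ((u : ZMod p))⁻¹ ^ k * ((u : ZMod p))⁻¹ := by
    simp only [Hp, MHS, mul_one, pow_succ]
  rw [e1, e2, e3, e4, e5, ← Finset.sum_sub_distrib, ← Finset.sum_sub_distrib,
    ← Finset.sum_sub_distrib, ← Finset.sum_sub_distrib]
  refine Finset.sum_congr rfl fun u hu => ?_
  rw [Finset.mem_Ioo] at hu
  have hs := star_id p hp hp2 hu.1 le_rfl hu.2
  rw [Nat.sub_self] at hs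
  linear_combination ((u : ZMod p))⁻¹ ^ k * hs

lemma MHS_append2 (p : ℕ) (s : List ℕ) (k a : ℕ) :
    MHS p (s ++ [k, 1]) a
      = F p (fun v => ∑ u ∈ Finset.Ioo v p, ((u : ZMod p))⁻¹ ^ k * J p u p) s a := by
  rw [MHS_eq_F, F_append]
  simp only [F, mul_one, pow_one, J]

lemma sh_cons (p : ℕ) (hp : p.Prime) (hp2 : 2 < p) (k b : ℕ) (s : List ℕ) :
    Tt' p k (b :: s) = Tt p b (s ++ [k])
      - Hp p (1 :: b :: (s ++ [k])) - Hp p ((b + 1) :: (s ++ [k]))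
      - Hp p (b :: (s ++ [k, 1])) - Hp p (b :: (s ++ [k+1])) := by
  have key : ∀ v₁ ∈ Finset.Ioo 0 p,
      (∑ c ∈ Finset.Ioo 0 v₁,
        F p (fun v => ∑ u ∈ Finset.Ioo v p, ((u : ZMod p))⁻¹ ^ k * ((u - c : ℕ) : ZMod p)⁻¹) s v₁)
      = F p (fun v => ∑ u ∈ Finset.Ioo v p, ((u : ZMod p))⁻¹ ^ k
            * (∑ w' ∈ Finset.Ioo u p, ((w' - v₁ : ℕ) : ZMod p)⁻¹)) s v₁
        - J p 0 v₁ * F p (fun v => ∑ u ∈ Finset.Ioo v p, ((u : ZMod p))⁻¹ ^ k) s v₁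
        - ((v₁ : ZMod p))⁻¹ * F p (fun v => ∑ u ∈ Finset.Ioo v p, ((u : ZMod p))⁻¹ ^ k) s v₁
        - F p (fun v => ∑ u ∈ Finset.Ioo v p, ((u : ZMod p))⁻¹ ^ k * J p u p) s v₁
        - F p (fun v => ∑ u ∈ Finset.Ioo v p, ((u : ZMod p))⁻¹ ^ (k+1)) s v₁ := by
    intro v₁ hv₁
    rw [Finset.mem_Ioo] at hv₁
    rw [← F_sum, ← F_const_mul, ← F_const_mul, ← F_sub, ← F_sub, ← F_sub, ← F_sub]
    refine F_congr s hv₁.2 ?_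
    intro v hvv hvp
    -- pointwise in v, v₁ ≤ v < p
    rw [Finset.sum_comm]
    -- now : ∑ u ∈ Ioo v p, ∑ c ∈ Ioo 0 v₁, u⁻¹^k * (u-c)⁻¹  -- (order after sum_comm?)
    rw [Finset.mul_sum, Finset.mul_sum, ← Finset.sum_sub_distrib, ← Finset.sum_sub_distrib,
      ← Finset.sum_sub_distrib, ← Finset.sum_sub_distrib]
    refine Finset.sum_congr rfl fun u hu => ?_
    rw [Finset.mem_Ioo] at hu
    have hvu : v₁ ≤ u := le_of_lt (lt_of_le_of_lt hvv hu.1)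
    rw [← Finset.mul_sum, psi_eq p hv₁.1 hvu, chi_eq p hv₁.1 hvu hu.2]
    have hs := star_id p hp hp2 hv₁.1 hvu hu.2
    rw [hs]
    rw [pow_succ]
    ring
  -- assemble
  rw [Tt']
  simp only [F]
  rw [swapcu p (fun c v₁ => ((v₁ : ZMod p))⁻¹ ^ b
    * F p (fun v => ∑ u ∈ Finset.Ioo v p, ((u : ZMod p))⁻¹ ^ k * ((u - c : ℕ) : ZMod p)⁻¹) s v₁)]
  have step2 : ∀ v₁ ∈ Finset.Ioo 0 p,
      (∑ c ∈ Finset.Ioo 0 v₁, ((v₁ : ZMod p))⁻¹ ^ b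
        * F p (fun v => ∑ u ∈ Finset.Ioo v p, ((u : ZMod p))⁻¹ ^ k * ((u - c : ℕ) : ZMod p)⁻¹) s v₁)
      = ((v₁ : ZMod p))⁻¹ ^ b
        * (F p (fun v => ∑ u ∈ Finset.Ioo v p, ((u : ZMod p))⁻¹ ^ k
              * (∑ w' ∈ Finset.Ioo u p, ((w' - v₁ : ℕ) : ZMod p)⁻¹)) s v₁
          - J p 0 v₁ * F p (fun v => ∑ u ∈ Finset.Ioo v p, ((u : ZMod p))⁻¹ ^ k) s v₁
          - ((v₁ : ZMod p))⁻¹ * F p (fun v => ∑ u ∈ Finset.Ioo v p, ((u : ZMod p))⁻¹ ^ k) s v₁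
          - F p (fun v => ∑ u ∈ Finset.Ioo v p, ((u : ZMod p))⁻¹ ^ k * J p u p) s v₁
          - F p (fun v => ∑ u ∈ Finset.Ioo v p, ((u : ZMod p))⁻¹ ^ (k+1)) s v₁) := by
    intro v₁ hv₁
    rw [← Finset.mul_sum, key v₁ hv₁]
  rw [Finset.sum_congr rfl step2]
  simp only [mul_sub]
  rw [Finset.sum_sub_distrib, Finset.sum_sub_distrib, Finset.sum_sub_distrib,
    Finset.sum_sub_distrib]
  have S1 : (∑ v₁ ∈ Finset.Ioo 0 p, ((v₁ : ZMod p))⁻¹ ^ b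
      * F p (fun v => ∑ u ∈ Finset.Ioo v p, ((u : ZMod p))⁻¹ ^ k
          * (∑ w' ∈ Finset.Ioo u p, ((w' - v₁ : ℕ) : ZMod p)⁻¹)) s v₁)
      = Tt p b (s ++ [k]) := by
    rw [Tt]
    refine Finset.sum_congr rfl fun v₁ _ => ?_
    rw [F_append]
    simp only [F]
  have S2 : (∑ v₁ ∈ Finset.Ioo 0 p, ((v₁ : ZMod p))⁻¹ ^ b
      * (J p 0 v₁ * F p (fun v => ∑ u ∈ Finset.Ioo v p, ((u : ZMod p))⁻¹ ^ k) s v₁))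
      = Hp p (1 :: b :: (s ++ [k])) := by
    simp only [Hp, MHS, pow_one]
    rw [Finset.sum_congr rfl (fun x (_ : x ∈ Finset.Ioo 0 p) =>
      Finset.mul_sum (Finset.Ioo x p)
        (fun n => ((n : ZMod p))⁻¹ ^ b * MHS p (s ++ [k]) n) ((x : ZMod p))⁻¹)]
    rw [swapcu p (fun x n => ((x : ZMod p))⁻¹ * (((n : ZMod p))⁻¹ ^ b * MHS p (s ++ [k]) n))]
    refine Finset.sum_congr rfl fun v₁ _ => ?_
    rw [← Finset.sum_mul, MHS_append, J]
    ring
  have S3 : (∑ v₁ ∈ Finset.Ioo 0 p, ((v₁ : ZMod p))⁻¹ ^ b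
      * (((v₁ : ZMod p))⁻¹ * F p (fun v => ∑ u ∈ Finset.Ioo v p, ((u : ZMod p))⁻¹ ^ k) s v₁))
      = Hp p ((b + 1) :: (s ++ [k])) := by
    simp only [Hp, MHS]
    refine Finset.sum_congr rfl fun v₁ _ => ?_
    rw [MHS_append, pow_succ]
    ring
  have S4 : (∑ v₁ ∈ Finset.Ioo 0 p, ((v₁ : ZMod p))⁻¹ ^ b
      * F p (fun v => ∑ u ∈ Finset.Ioo v p, ((u : ZMod p))⁻¹ ^ k * J p u p) s v₁)
      = Hp p (b :: (s ++ [k, 1])) := by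
    simp only [Hp, MHS]
    exact Finset.sum_congr rfl fun v₁ _ => by rw [MHS_append2]
  have S5 : (∑ v₁ ∈ Finset.Ioo 0 p, ((v₁ : ZMod p))⁻¹ ^ b
      * F p (fun v => ∑ u ∈ Finset.Ioo v p, ((u : ZMod p))⁻¹ ^ (k+1)) s v₁)
      = Hp p (b :: (s ++ [k+1])) := by
    simp only [Hp, MHS]
    exact Finset.sum_congr rfl fun v₁ _ => by rw [MHS_append]
  rw [S1, S2, S3, S4, S5]

lemma headI_rotate {α : Type*} [Inhabited α] {ks : List α} {l : ℕ} (h : l < ks.length) (d : α) :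
    (ks.rotate l).headI = ks.getD l d := by
  rw [List.rotate_eq_drop_append_take h.le]
  have hx : ks.drop l = ks[l] :: ks.drop (l+1) := List.drop_eq_getElem_cons h
  rw [hx, List.cons_append, List.getD_eq_getElem ks d h]
  rfl

lemma rotate_succ' {α : Type*} [Inhabited α] (ks : List α) (hne : ks ≠ []) (l : ℕ) :
    ks.rotate (l + 1) = (ks.rotate l).tail ++ [(ks.rotate l).headI] := by
  rw [← List.rotate_rotate]
  have hrne : ks.rotate l ≠ [] := by
    intro hc
    exact hne (List.eq_nil_of_length_eq_zero (by simpa using congrArg List.length hc))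
  obtain ⟨x, xs, hx⟩ := List.exists_cons_of_ne_nil hrne
  rw [hx, List.rotate_cons_succ, List.rotate_zero]
  rfl

lemma sh_main (p : ℕ) (hp : p.Prime) (hp2 : 2 < p) (k : ℕ) (t : List ℕ) :
    Tt' p k t = Tt p ((t ++ [k]).headI) ((t ++ [k]).tail)
      - Hp p (1 :: (t ++ [k])) - Hp p (((t ++ [k]).headI + 1) :: (t ++ [k]).tail)
      - Hp p ((t ++ [k]) ++ [1]) - Hp p (t ++ [k+1]) := by
  cases t with
  | nil => simpa using sh_nil p hp hp2 k
  | cons b s => simpa [List.append_assoc] using sh_cons p hp hp2 k b s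

lemma cyc_shift (p : ℕ) (ks : List ℕ) (f : List ℕ → ZMod p) :
    ∑ l ∈ Finset.range ks.length, f (ks.rotate (l+1))
      = ∑ l ∈ Finset.range ks.length, f (ks.rotate l) := by
  have h1 := Finset.sum_range_succ (fun l => f (ks.rotate l)) ks.length
  have h2 := Finset.sum_range_succ' (fun l => f (ks.rotate l)) ks.length
  rw [List.rotate_length] at h1
  rw [List.rotate_zero] at h2
  linear_combination h1 - h2

lemma range_reindex (p : ℕ) (K : ℕ) (hK : 1 ≤ K) (G : ℕ → ZMod p) :
    ∑ j ∈ Finset.range K, G j = G 0 + ∑ m ∈ Finset.Icc 1 (K - 1), G (K - m) := by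
  have hsplit : Finset.range K = insert 0 (Finset.Icc 1 (K-1)) := by
    ext x
    simp only [Finset.mem_range, Finset.mem_Icc, Finset.mem_insert]
    omega
  rw [hsplit, Finset.sum_insert (by simp)]
  congr 1
  refine Finset.sum_nbij' (fun j => K - j) (fun m => K - m) ?_ ?_ ?_ ?_ ?_ <;>
    intro x hx <;> simp only [Finset.mem_Icc] at hx ⊢
  · omega
  · omega
  · omega
  · omega
  · exact (congrArg G (Nat.sub_sub_self (by omega))).symm

lemma headI_cons_tail {α : Type*} [Inhabited α] (w : List α) (hw : w ≠ []) :
    w.headI :: w.tail = w := by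
  cases w with
  | nil => exact absurd rfl hw
  | cons a s => rfl


theorem cyclic_sum_formula
    (ks : List ℕ) (hne : ks ≠ []) (hpos : ∀ k ∈ ks, 1 ≤ k)
    (hnotall1 : ¬ ∀ k ∈ ks, k = 1) :
    ∃ N : ℕ, ∀ p : ℕ, p.Prime → N < p →
      ∑ l ∈ Finset.range ks.length, ∑ m ∈ Finset.Icc 1 (ks.getD l 1 - 1),
          Hp p (m :: ((ks.rotate (l + 1)).dropLast ++ [ks.getD l 1 - m + 1]))
        = ∑ l ∈ Finset.range ks.length,
            (Hp p ((ks.rotate (l + 1)).dropLast ++ [ks.getD l 1 + 1])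
              + Hp p (((ks.rotate (l + 1)).headI + 1) :: (ks.rotate (l + 1)).tail)
              + Hp p (1 :: ks.rotate (l + 1))) := by
  refine ⟨2, fun p hp hp2 => ?_⟩
  set r := ks.length with hr
  -- basic facts
  have hgetD : ∀ l ∈ Finset.range r, ks.getD l 1 = (ks.rotate l).headI := by
    intro l hl
    exact (headI_rotate (Finset.mem_range.mp hl) 1).symm
  have hDL : ∀ l, (ks.rotate (l+1)).dropLast = (ks.rotate l).tail := by
    intro l
    rw [rotate_succ' ks hne l, List.dropLast_concat]
  have hK1 : ∀ l ∈ Finset.range r, 1 ≤ (ks.rotate l).headI := by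
    intro l hl
    rw [← hgetD l hl, List.getD_eq_getElem ks 1 (Finset.mem_range.mp hl)]
    exact hpos _ (List.getElem_mem _)
  -- the per-rotation identity (PF + SH)
  have main : ∀ l, Tt p ((ks.rotate l).headI) ((ks.rotate l).tail)
      = (∑ j ∈ Finset.range ((ks.rotate l).headI),
            Hp p ((((ks.rotate l).headI) - j) :: ((ks.rotate l).tail ++ [j+1])))
        + (Tt p ((ks.rotate (l+1)).headI) ((ks.rotate (l+1)).tail)
           - Hp p (1 :: ks.rotate (l+1))
           - Hp p (((ks.rotate (l+1)).headI + 1) :: (ks.rotate (l+1)).tail)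
           - Hp p (ks.rotate (l+1) ++ [1])
           - Hp p ((ks.rotate l).tail ++ [(ks.rotate l).headI + 1])) := by
    intro l
    have hrw : (ks.rotate l).tail ++ [(ks.rotate l).headI] = ks.rotate (l+1) :=
      (rotate_succ' ks hne l).symm
    have h1 := pf_main p hp ((ks.rotate l).headI) ((ks.rotate l).tail)
    have h2 := sh_main p hp hp2 ((ks.rotate l).headI) ((ks.rotate l).tail)
    rw [hrw] at h2
    rw [h1, h2]
  -- sum over l and telescope
  have hsum := Finset.sum_congr rfl (fun l (_ : l ∈ Finset.range r) => main l)
  rw [Finset.sum_add_distrib, Finset.sum_sub_distrib, Finset.sum_sub_distrib,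
    Finset.sum_sub_distrib, Finset.sum_sub_distrib] at hsum
  have hshift1 : ∑ l ∈ Finset.range r,
      Tt p ((ks.rotate (l+1)).headI) ((ks.rotate (l+1)).tail)
      = ∑ l ∈ Finset.range r, Tt p ((ks.rotate l).headI) ((ks.rotate l).tail) :=
    cyc_shift p ks (fun w => Tt p w.headI w.tail)
  rw [hshift1] at hsum
  -- key telescoped identity
  have key : (∑ l ∈ Finset.range r, ∑ j ∈ Finset.range ((ks.rotate l).headI),
        Hp p ((((ks.rotate l).headI) - j) :: ((ks.rotate l).tail ++ [j+1])))
      = (∑ l ∈ Finset.range r, Hp p (1 :: ks.rotate (l+1)))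
        + (∑ l ∈ Finset.range r, Hp p (((ks.rotate (l+1)).headI + 1) :: (ks.rotate (l+1)).tail))
        + (∑ l ∈ Finset.range r, Hp p (ks.rotate (l+1) ++ [1]))
        + (∑ l ∈ Finset.range r, Hp p ((ks.rotate l).tail ++ [(ks.rotate l).headI + 1])) := by
    linear_combination -hsum
  -- split the inner j-sum
  have hA : ∀ l ∈ Finset.range r, (∑ j ∈ Finset.range ((ks.rotate l).headI),
        Hp p ((((ks.rotate l).headI) - j) :: ((ks.rotate l).tail ++ [j+1])))
      = Hp p (ks.rotate l ++ [1])
        + ∑ m ∈ Finset.Icc 1 ((ks.rotate l).headI - 1),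
            Hp p (m :: ((ks.rotate l).tail ++ [(ks.rotate l).headI - m + 1])) := by
    intro l hl
    rw [range_reindex p _ (hK1 l hl)]
    congr 1
    · rw [Nat.sub_zero]
      have : (ks.rotate l).headI :: ((ks.rotate l).tail ++ [0+1]) = ks.rotate l ++ [1] := by
        rw [← List.cons_append, headI_cons_tail _ (fun hc =>
          hne (List.eq_nil_of_length_eq_zero (by simpa using congrArg List.length hc)))]
      rw [this]
    · refine Finset.sum_congr rfl fun m hm => ?_
      rw [Finset.mem_Icc] at hm
      have h1 : (ks.rotate l).headI - ((ks.rotate l).headI - m) = m := by omega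
      rw [h1]
  rw [Finset.sum_congr rfl hA, Finset.sum_add_distrib] at key
  have hshift2 : ∑ l ∈ Finset.range r, Hp p (ks.rotate (l+1) ++ [1])
      = ∑ l ∈ Finset.range r, Hp p (ks.rotate l ++ [1]) :=
    cyc_shift p ks (fun w => Hp p (w ++ [1]))
  rw [hshift2] at key
  -- rewrite the goal into rotate-headI/tail form
  have hL : ∑ l ∈ Finset.range r, ∑ m ∈ Finset.Icc 1 (ks.getD l 1 - 1),
        Hp p (m :: ((ks.rotate (l + 1)).dropLast ++ [ks.getD l 1 - m + 1]))
      = ∑ l ∈ Finset.range r, ∑ m ∈ Finset.Icc 1 ((ks.rotate l).headI - 1),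
          Hp p (m :: ((ks.rotate l).tail ++ [(ks.rotate l).headI - m + 1])) := by
    refine Finset.sum_congr rfl fun l hl => ?_
    rw [hgetD l hl, hDL l]
  have hR : ∑ l ∈ Finset.range r,
        (Hp p ((ks.rotate (l + 1)).dropLast ++ [ks.getD l 1 + 1])
          + Hp p (((ks.rotate (l + 1)).headI + 1) :: (ks.rotate (l + 1)).tail)
          + Hp p (1 :: ks.rotate (l + 1)))
      = (∑ l ∈ Finset.range r, Hp p ((ks.rotate l).tail ++ [(ks.rotate l).headI + 1]))
        + (∑ l ∈ Finset.range r, Hp p (((ks.rotate (l+1)).headI + 1) :: (ks.rotate (l+1)).tail))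
        + (∑ l ∈ Finset.range r, Hp p (1 :: ks.rotate (l+1))) := by
    rw [← Finset.sum_add_distrib, ← Finset.sum_add_distrib]
    refine Finset.sum_congr rfl fun l hl => ?_
    rw [hgetD l hl, hDL l]
  rw [hL, hR]
  linear_combination key
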